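/- The output of the sparsify procedure preserves δ-density: if the input sorted list A (with smallest element 1) is δ-dense with respect to a monotone nondecreasing function s, then the list obtained by repeatedly removing the middle element a_{j+1} of any consecutive triple (a_j, a_{j+1}, a_{j+2}) with s(a_{j+2}) − s(a_j) ≤ δ is still δ-dense. -/

import Mathlib

/-- One sparsification step: remove the middle element of a consecutive triple
`x, y, z` with `s z − s x ≤ δ`. -/
def sparStep (s : ℕ → ℝ) (δ : ℝ) (A B : List ℕ) : Prop :=
  ∃ (l r : List ℕ) (x y z : ℕ),
    A = l ++ [x, y, z] ++ r ∧ B = l ++ [x, z] ++ r ∧ s z - s x ≤ δ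

/-- `δ`-density of a list w.r.t. `s`: each consecutive pair `u, v` satisfies
`s v ≤ δ + s u` or `v = u + 1`. -/
def dense (s : ℕ → ℝ) (δ : ℝ) (A : List ℕ) : Prop :=
  A.Chain' (fun u v => s v ≤ δ + s u ∨ v = u + 1)

lemma step_dense (s : ℕ → ℝ) (δ : ℝ) (A B : List ℕ)
    (hA : dense s δ A) (h : sparStep s δ A B) : dense s δ B := by
  obtain ⟨l, r, x, y, z, rfl, rfl, hle⟩ := h
  unfold dense List.Chain' at hA ⊢
  have e1 : l ++ [x, y, z] ++ r = l ++ (x :: y :: z :: r) := by simp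
  have e2 : l ++ [x, z] ++ r = l ++ (x :: z :: r) := by simp
  rw [e1, List.isChain_append] at hA
  rw [e2, List.isChain_append]
  obtain ⟨h1, h2, h3⟩ := hA
  rw [List.isChain_cons_cons, List.isChain_cons_cons] at h2
  refine ⟨h1, ?_, ?_⟩
  · rw [List.isChain_cons_cons]
    exact ⟨Or.inl (by linarith), h2.2.2⟩
  · intro a ha b hb
    exact h3 a ha b (by simpa using hb)

theorem stmt14 (s : ℕ → ℝ) (hs : Monotone s) (δ : ℝ) (hδ : 0 ≤ δ)
    (A B : List ℕ) (hsort : A.Pairwise (· < ·)) (hhead : A.head? = some 1)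
    (hA : dense s δ A)
    (hAB : Relation.ReflTransGen (sparStep s δ) A B) :
    dense s δ B := by
  induction hAB with
  | refl => exact hA
  | tail _ hstep ih => exact step_dense s δ _ _ ih hstep
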